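/- Let s, q ≥ 2 and let m ≥ 2 with m ≠ 3. In the graph F'_{s,q,m}, with x, v₁, a, b as in its construction and h₁, h₂ the two universal vertices of the copy of H_m, a two-element set D of vertices is a dominating set of F'_{s,q,m} if and only if D is one of {x, v₁}, {x, a}, {x, b}, {v₁, h₁}, {v₁, h₂}. -/

import Mathlib

/-- `D` is a dominating set of `G`: every vertex not in `D` has a neighbor in `D`. -/
def Dominating {V : Type*} (G : SimpleGraph V) (D : Set V) : Prop :=
  ∀ v, v ∉ D → ∃ d ∈ D, G.Adj d v

/-- The graph `H_m`, the join of `K₂` with the complement of `K_{m-2}`: the first two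
vertices are adjacent to everything, the remaining vertices form an independent set.
(`H₀` is the null graph, `H₂ = K₂`.) -/
def HGraph (m : ℕ) : SimpleGraph (Fin m) :=
  SimpleGraph.fromRel (fun u _ => u.val < 2)

/-- Vertex type of `F'_{s,q,m}`: the part `{a, b}` of `K_{2,s}` (`a = inl (inl 0)`,
`b = inl (inl 1)`), the `s`-part of `K_{2,s}`, the `q - 2` vertices `b₁, …, b_{q-2}`,
the vertex `v₁ = inr (inl ())`, the copy of `H_m`, and the vertex `x = inr (inr (inr ()))`. -/
abbrev F'Vert (s q m : ℕ) : Type :=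
  (Fin 2 ⊕ (Fin s ⊕ Fin (q - 2))) ⊕ (Unit ⊕ (Fin m ⊕ Unit))

/-- The graph `F'_{s,q,m}`. -/
def F'Graph (s q m : ℕ) : SimpleGraph (F'Vert s q m) :=
  SimpleGraph.fromRel (fun u v =>
    match u, v with
    | .inl (.inl _), .inl (.inr (.inl _)) => True        -- {a, b} to the s-part
    | .inr (.inl _), .inl _ => True                      -- v₁ to all of P
    | .inr (.inr (.inl h)), .inr (.inr (.inl _)) => h.val < 2  -- inside H_m
    | .inr (.inr (.inr _)), .inr (.inr (.inl _)) => True -- x to H_m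
    | .inr (.inr (.inr _)), .inl (.inl _) => True        -- x to {a, b}
    | .inr (.inr (.inr _)), .inl (.inr (.inr _)) => True -- x to the bᵢ's
    | _, _ => False)

namespace F'aux
variable {s q m : ℕ}

lemma adj_spart {d : F'Vert s q m} {u : Fin s}
    (h : (F'Graph s q m).Adj d (Sum.inl (Sum.inr (Sum.inl u)))) :
    (∃ i : Fin 2, d = Sum.inl (Sum.inl i)) ∨ d = Sum.inr (Sum.inl ()) := by
  rw [F'Graph, SimpleGraph.fromRel_adj] at h
  rcases d with (i|(j|j))|(⟨⟩|(i|⟨⟩)) <;> simp_all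

lemma adj_h {d : F'Vert s q m} {j : Fin m}
    (h : (F'Graph s q m).Adj d (Sum.inr (Sum.inr (Sum.inl j)))) :
    (∃ i : Fin m, d = Sum.inr (Sum.inr (Sum.inl i))) ∨ d = Sum.inr (Sum.inr (Sum.inr ())) := by
  rw [F'Graph, SimpleGraph.fromRel_adj] at h
  rcases d with (i|(j|j))|(⟨⟩|(i|⟨⟩)) <;> simp_all

lemma adj_hind {d : F'Vert s q m} {j : Fin m} (hj : 2 ≤ j.val)
    (h : (F'Graph s q m).Adj d (Sum.inr (Sum.inr (Sum.inl j)))) :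
    (∃ i : Fin m, i.val < 2 ∧ d = Sum.inr (Sum.inr (Sum.inl i))) ∨ d = Sum.inr (Sum.inr (Sum.inr ())) := by
  rw [F'Graph, SimpleGraph.fromRel_adj] at h
  rcases d with (i|(j|j))|(⟨⟩|(i|⟨⟩)) <;> simp_all <;> omega

lemma adj_ab {d : F'Vert s q m} {i : Fin 2}
    (h : (F'Graph s q m).Adj d (Sum.inl (Sum.inl i))) :
    (∃ u : Fin s, d = Sum.inl (Sum.inr (Sum.inl u))) ∨ d = Sum.inr (Sum.inl ()) ∨
      d = Sum.inr (Sum.inr (Sum.inr ())) := by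
  rw [F'Graph, SimpleGraph.fromRel_adj] at h
  rcases d with (i|(j|j))|(⟨⟩|(i|⟨⟩)) <;> simp_all

end F'aux

open F'aux in
theorem stmt18 (s q m : ℕ) (hs : 2 ≤ s) (hq : 2 ≤ q) (hm : 2 ≤ m) (hm3 : m ≠ 3) :
    ∀ D : Set (F'Vert s q m), D.ncard = 2 →
      (Dominating (F'Graph s q m) D ↔
        D = {Sum.inr (Sum.inr (Sum.inr ())), Sum.inr (Sum.inl ())} ∨
        D = {Sum.inr (Sum.inr (Sum.inr ())), Sum.inl (Sum.inl 0)} ∨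
        D = {Sum.inr (Sum.inr (Sum.inr ())), Sum.inl (Sum.inl 1)} ∨
        D = {Sum.inr (Sum.inl ()), Sum.inr (Sum.inr (Sum.inl ⟨0, by omega⟩))} ∨
        D = {Sum.inr (Sum.inl ()), Sum.inr (Sum.inr (Sum.inl ⟨1, by omega⟩))}) := by
  intro D hD
  constructor
  · intro hdom
    obtain ⟨d₁, d₂, hd12, rfl⟩ := Set.ncard_eq_two.mp hD
    -- Claim 1 : one of a, b, v₁ is in D
    have claim1 : (∃ i : Fin 2, Sum.inl (Sum.inl i) ∈ ({d₁, d₂} : Set (F'Vert s q m))) ∨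
        Sum.inr (Sum.inl ()) ∈ ({d₁, d₂} : Set (F'Vert s q m)) := by
      by_contra hC
      push_neg at hC
      obtain ⟨hab, hv⟩ := hC
      have hsmem : ∀ u : Fin s, Sum.inl (Sum.inr (Sum.inl u)) ∈ ({d₁, d₂} : Set (F'Vert s q m)) := by
        intro u
        by_contra hu
        obtain ⟨d, hdD, hadj⟩ := hdom _ hu
        rcases adj_spart hadj with ⟨i, rfl⟩ | rfl
        · exact hab i hdD
        · exact hv hdD
      have h0 := hsmem ⟨0, by omega⟩
      have h1 := hsmem ⟨1, by omega⟩
      simp only [Set.mem_insert_iff, Set.mem_singleton_iff] at h0 h1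
      have hne01 : (Sum.inl (Sum.inr (Sum.inl (⟨0, by omega⟩ : Fin s))) : F'Vert s q m) ≠
          Sum.inl (Sum.inr (Sum.inl (⟨1, by omega⟩ : Fin s))) := by
        simp [Fin.ext_iff]
      have hd1 : ∃ u : Fin s, d₁ = Sum.inl (Sum.inr (Sum.inl u)) := by
        rcases h0 with h | h
        · exact ⟨_, h.symm⟩
        · rcases h1 with h' | h'
          · exact ⟨_, h'.symm⟩
          · exact absurd (h.trans h'.symm) hne01
      have hd2 : ∃ u : Fin s, d₂ = Sum.inl (Sum.inr (Sum.inl u)) := by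
        rcases h1 with h | h
        · rcases h0 with h' | h'
          · exact absurd (h'.trans h.symm) hne01
          · exact ⟨_, h'.symm⟩
        · exact ⟨_, h.symm⟩
      obtain ⟨u1, rfl⟩ := hd1
      obtain ⟨u2, rfl⟩ := hd2
      have hh0 : (Sum.inr (Sum.inr (Sum.inl (⟨0, by omega⟩ : Fin m))) : F'Vert s q m)
          ∉ ({Sum.inl (Sum.inr (Sum.inl u1)), Sum.inl (Sum.inr (Sum.inl u2))} :
            Set (F'Vert s q m)) := by simp
      obtain ⟨d, hdD, hadj⟩ := hdom _ hh0
      simp only [Set.mem_insert_iff, Set.mem_singleton_iff] at hdD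
      rcases adj_h hadj with ⟨i, rfl⟩ | rfl <;> rcases hdD with h | h <;> simp_all
    -- Claim 2 : x ∈ D or some H-vertex is in D
    have claim2 : Sum.inr (Sum.inr (Sum.inr ())) ∈ ({d₁, d₂} : Set (F'Vert s q m)) ∨
        ∃ i : Fin m, Sum.inr (Sum.inr (Sum.inl i)) ∈ ({d₁, d₂} : Set (F'Vert s q m)) := by
      by_cases hh : Sum.inr (Sum.inr (Sum.inl (⟨0, by omega⟩ : Fin m))) ∈ ({d₁, d₂} : Set (F'Vert s q m))
      · exact Or.inr ⟨_, hh⟩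
      · obtain ⟨d, hdD, hadj⟩ := hdom _ hh
        rcases adj_h hadj with ⟨i, rfl⟩ | rfl
        · exact Or.inr ⟨i, hdD⟩
        · exact Or.inl hdD
    -- extract p and z
    rcases claim2 with hz | ⟨i, hz⟩
    · -- x ∈ D
      rcases claim1 with ⟨j, hp⟩ | hp
      · -- a or b with x : options 2 / 3
        have hDeq : ({d₁, d₂} : Set (F'Vert s q m)) =
            {Sum.inr (Sum.inr (Sum.inr ())), Sum.inl (Sum.inl j)} := by
          simp only [Set.mem_insert_iff, Set.mem_singleton_iff] at hz hp
          rcases hz with h | h <;> subst h <;> rcases hp with h' | h' <;> try subst h'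
          all_goals
            simp_all [Set.pair_comm]
        have : j = 0 ∨ j = 1 := by omega
        rcases this with rfl | rfl
        · exact Or.inr (Or.inl hDeq)
        · exact Or.inr (Or.inr (Or.inl hDeq))
      · -- v₁ with x : option 1
        refine Or.inl ?_
        simp only [Set.mem_insert_iff, Set.mem_singleton_iff] at hz hp
        rcases hz with h | h <;> subst h <;> rcases hp with h' | h' <;> try subst h'
        all_goals simp_all [Set.pair_comm]
    · -- h i ∈ D
      rcases claim1 with ⟨j, hp⟩ | hp
      · -- a or b with h i : contradiction, the other of a,b is undominated
        exfalso
        have hDeq : ({d₁, d₂} : Set (F'Vert s q m)) =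
            {Sum.inl (Sum.inl j), Sum.inr (Sum.inr (Sum.inl i))} := by
          simp only [Set.mem_insert_iff, Set.mem_singleton_iff] at hz hp
          rcases hz with h | h <;> subst h <;> rcases hp with h' | h' <;> try subst h'
          all_goals simp_all [Set.pair_comm]
        rw [hDeq] at hdom
        have hj' : (1 - j : Fin 2) ≠ j := by omega
        have hmem : (Sum.inl (Sum.inl (1 - j)) : F'Vert s q m) ∉
            ({Sum.inl (Sum.inl j), Sum.inr (Sum.inr (Sum.inl i))} : Set (F'Vert s q m)) := by
          simp [hj']
        obtain ⟨d, hdD, hadj⟩ := hdom _ hmem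
        simp only [Set.mem_insert_iff, Set.mem_singleton_iff] at hdD
        rcases hdD with rfl | rfl <;>
          (rw [F'Graph, SimpleGraph.fromRel_adj] at hadj; simp_all)
      · -- v₁ with h i
        by_cases hi2 : i.val < 2
        · have hDeq : ({d₁, d₂} : Set (F'Vert s q m)) =
              {Sum.inr (Sum.inl ()), Sum.inr (Sum.inr (Sum.inl i))} := by
            simp only [Set.mem_insert_iff, Set.mem_singleton_iff] at hz hp
            rcases hz with h | h <;> subst h <;> rcases hp with h' | h' <;> try subst h'
            all_goals simp_all [Set.pair_comm]
          have hiv : i.val = 0 ∨ i.val = 1 := by omega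
          rcases hiv with h | h
          · rw [show i = (⟨0, by omega⟩ : Fin m) from Fin.ext h] at hDeq
            exact Or.inr (Or.inr (Or.inr (Or.inl hDeq)))
          · rw [show i = (⟨1, by omega⟩ : Fin m) from Fin.ext h] at hDeq
            exact Or.inr (Or.inr (Or.inr (Or.inr hDeq)))
        · -- i.val ≥ 2, so m ≥ 4; another independent H-vertex undominated
          exfalso
          have hDeq : ({d₁, d₂} : Set (F'Vert s q m)) =
              {Sum.inr (Sum.inl ()), Sum.inr (Sum.inr (Sum.inl i))} := by
            simp only [Set.mem_insert_iff, Set.mem_singleton_iff] at hz hp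
            rcases hz with h | h <;> subst h <;> rcases hp with h' | h' <;> try subst h'
            all_goals simp_all [Set.pair_comm]
          rw [hDeq] at hdom
          have hm4 : 4 ≤ m := by omega
          set k : Fin m := if i.val = 2 then ⟨3, by omega⟩ else ⟨2, by omega⟩ with hk
          have hki : k.val ≠ i.val := by
            rcases Nat.decEq i.val 2 with h | h <;> simp [hk, h] <;> omega
          have hk2 : 2 ≤ k.val := by
            rcases Nat.decEq i.val 2 with h | h <;> simp [hk, h]
          have hmem : (Sum.inr (Sum.inr (Sum.inl k)) : F'Vert s q m) ∉
              ({Sum.inr (Sum.inl ()), Sum.inr (Sum.inr (Sum.inl i))} : Set (F'Vert s q m)) := by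
            simp [Fin.ext_iff, hki]
          obtain ⟨d, hdD, hadj⟩ := hdom _ hmem
          simp only [Set.mem_insert_iff, Set.mem_singleton_iff] at hdD
          rcases hdD with rfl | rfl <;>
            rw [F'Graph, SimpleGraph.fromRel_adj] at hadj <;>
            simp_all [Fin.ext_iff] <;> omega
  · -- reverse direction
    rintro (rfl | rfl | rfl | rfl | rfl) <;>
      · intro v hv
        simp only [Set.mem_insert_iff, Set.mem_singleton_iff, not_or] at hv
        rcases v with (i|(u|j))|(⟨⟩|(i|⟨⟩)) <;>
          first
          | (refine ⟨Sum.inr (Sum.inr (Sum.inr ())), ?_, ?_⟩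
             · simp
             · rw [F'Graph, SimpleGraph.fromRel_adj]; simp [Fin.ext_iff] <;> omega)
          | (refine ⟨Sum.inr (Sum.inl ()), ?_, ?_⟩
             · simp
             · rw [F'Graph, SimpleGraph.fromRel_adj]; simp_all [Fin.ext_iff] <;> omega)
          | (refine ⟨Sum.inl (Sum.inl 0), ?_, ?_⟩
             · simp
             · rw [F'Graph, SimpleGraph.fromRel_adj]; simp_all [Fin.ext_iff] <;> omega)
          | (refine ⟨Sum.inl (Sum.inl 1), ?_, ?_⟩
             · simp
             · rw [F'Graph, SimpleGraph.fromRel_adj]; simp_all [Fin.ext_iff] <;> omega)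
          | (refine ⟨Sum.inr (Sum.inr (Sum.inl ⟨0, by omega⟩)), ?_, ?_⟩
             · simp
             · rw [F'Graph, SimpleGraph.fromRel_adj]; simp_all [Fin.ext_iff] <;> omega)
          | (refine ⟨Sum.inr (Sum.inr (Sum.inl ⟨1, by omega⟩)), ?_, ?_⟩
             · simp
             · rw [F'Graph, SimpleGraph.fromRel_adj]; simp_all [Fin.ext_iff] <;> omega)
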